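/- Let R be a commutative ring and ψ: N → M a surjective homomorphism of R-modules. Then pullback along ψ (sending a polynomial law f: M → R to f ∘ ψ) is a graded isomorphism from the graded ring R[M] of polynomial laws M → R onto the graded R-subalgebra of R[N] whose degree-d part consists of those homogeneous degree-d polynomial laws f: N → R satisfying f ∘ t_u = f for all u in ker(ψ), where t_u: N → N is the translation polynomial law v ↦ v + u. -/

import Mathlib

open scoped TensorProduct

universe u

/-- A polynomial law `M → N` over `R`: a family of maps `A ⊗[R] M → A ⊗[R] N`, one for every
commutative `R`-algebra `A`, commuting with base change along all `R`-algebra homomorphisms. -/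
structure PolyLaw (R : Type u) [CommRing R] (M N : Type u)
    [AddCommGroup M] [Module R M] [AddCommGroup N] [Module R N] : Type (u + 1) where
  toFun : ∀ (A : Type u) [CommRing A] [Algebra R A], A ⊗[R] M → A ⊗[R] N
  isCompat : ∀ {A B : Type u} [CommRing A] [Algebra R A] [CommRing B] [Algebra R B]
      (φ : A →ₐ[R] B) (x : A ⊗[R] M),
      LinearMap.rTensor N φ.toLinearMap (toFun A x) = toFun B (LinearMap.rTensor M φ.toLinearMap x)

namespace PolyLaw

variable {R : Type u} [CommRing R] {M N P : Type u}
  [AddCommGroup M] [Module R M] [AddCommGroup N] [Module R N] [AddCommGroup P] [Module R P]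

theorem ext' {f g : PolyLaw R M N}
    (h : ∀ (A : Type u) [CommRing A] [Algebra R A] (x : A ⊗[R] M), f.toFun A x = g.toFun A x) :
    f = g := by
  cases f; cases g
  simp only [mk.injEq]
  funext A instA instB x
  exact h A x

/-- A polynomial law is homogeneous of degree `d` if `φ_A (a • m) = a ^ d • φ_A m` always. -/
def IsHomogeneous (f : PolyLaw R M N) (d : ℕ) : Prop :=
  ∀ (A : Type u) [CommRing A] [Algebra R A] (a : A) (x : A ⊗[R] M),
    f.toFun A (a • x) = a ^ d • f.toFun A x

/-- The polynomial law induced by a linear map. -/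
noncomputable def ofLinear (ψ : M →ₗ[R] N) : PolyLaw R M N where
  toFun A _ _ := LinearMap.lTensor A ψ
  isCompat φ x := by
    show LinearMap.rTensor N φ.toLinearMap (LinearMap.lTensor _ ψ x)
      = LinearMap.lTensor _ ψ (LinearMap.rTensor M φ.toLinearMap x)
    rw [← LinearMap.comp_apply, ← LinearMap.comp_apply,
      LinearMap.rTensor_comp_lTensor, LinearMap.lTensor_comp_rTensor]

/-- Composition of polynomial laws. -/
def comp (g : PolyLaw R N P) (f : PolyLaw R M N) : PolyLaw R M P where
  toFun A _ _ x := g.toFun A (f.toFun A x)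
  isCompat φ x := by rw [g.isCompat φ, f.isCompat φ]

/-- Translation by an element `u : N`, as a polynomial law `N → N`. -/
noncomputable def translation (u : N) : PolyLaw R N N where
  toFun A _ _ x := x + (1 : A) ⊗ₜ[R] u
  isCompat φ x := by
    simp [map_add, LinearMap.rTensor_tmul, map_one]

end PolyLaw

namespace PolyLaw

variable {R : Type u} [CommRing R] {M N : Type u}
  [AddCommGroup M] [Module R M] [AddCommGroup N] [Module R N]

noncomputable instance : Zero (PolyLaw R M N) :=
  ⟨{ toFun := fun A _ _ _ => 0, isCompat := fun φ x => by simp }⟩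

noncomputable instance : Add (PolyLaw R M N) :=
  ⟨fun f g =>
    { toFun := fun A _ _ x => f.toFun A x + g.toFun A x
      isCompat := fun φ x => by simp [map_add, f.isCompat, g.isCompat] }⟩

noncomputable instance : Neg (PolyLaw R M N) :=
  ⟨fun f =>
    { toFun := fun A _ _ x => - f.toFun A x
      isCompat := fun φ x => by simp [map_neg, f.isCompat] }⟩

noncomputable instance : SMul R (PolyLaw R M N) :=
  ⟨fun r f =>
    { toFun := fun A _ _ x => r • f.toFun A x
      isCompat := fun φ x => by simp [map_smul, f.isCompat] }⟩

@[simp] lemma zero_toFun (A : Type u) [CommRing A] [Algebra R A] (x : A ⊗[R] M) :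
    (0 : PolyLaw R M N).toFun A x = 0 := rfl

@[simp] lemma add_toFun (f g : PolyLaw R M N) (A : Type u) [CommRing A] [Algebra R A]
    (x : A ⊗[R] M) : (f + g).toFun A x = f.toFun A x + g.toFun A x := rfl

@[simp] lemma neg_toFun (f : PolyLaw R M N) (A : Type u) [CommRing A] [Algebra R A]
    (x : A ⊗[R] M) : (-f).toFun A x = - f.toFun A x := rfl

@[simp] lemma smul_toFun (r : R) (f : PolyLaw R M N) (A : Type u) [CommRing A] [Algebra R A]
    (x : A ⊗[R] M) : (r • f).toFun A x = r • f.toFun A x := rfl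

noncomputable instance : AddCommGroup (PolyLaw R M N) where
  add_assoc a b c := ext' (by intros; simp [add_assoc])
  zero_add a := ext' (by intros; simp)
  add_zero a := ext' (by intros; simp)
  add_comm a b := ext' (by intros; simp [add_comm])
  neg_add_cancel a := ext' (by intros; simp)
  nsmul := nsmulRec
  zsmul := zsmulRec

noncomputable instance : Module R (PolyLaw R M N) where
  one_smul f := ext' (by intros; simp)
  mul_smul r s f := ext' (by intros; simp [mul_smul])
  smul_zero r := ext' (by intros; simp)
  smul_add r f g := ext' (by intros; simp)
  add_smul r s f := ext' (by intros; simp [add_smul])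
  zero_smul f := ext' (by intros; simp)

lemma rTensor_eq_algMap {A B : Type u} [CommRing A] [Algebra R A] [CommRing B] [Algebra R B]
    (φ : A →ₐ[R] B) (x : A ⊗[R] R) :
    LinearMap.rTensor R φ.toLinearMap x = Algebra.TensorProduct.map φ (AlgHom.id R R) x := by
  induction x using TensorProduct.induction_on with
  | zero => simp
  | tmul a r => simp
  | add x y hx hy => simp [map_add, hx, hy]

noncomputable instance : One (PolyLaw R M R) :=
  ⟨{ toFun := fun A _ _ _ => 1
     isCompat := fun φ x => by rw [rTensor_eq_algMap, map_one] }⟩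

noncomputable instance : Mul (PolyLaw R M R) :=
  ⟨fun f g =>
    { toFun := fun A _ _ x => f.toFun A x * g.toFun A x
      isCompat := fun φ x => by
        rw [rTensor_eq_algMap, map_mul, ← rTensor_eq_algMap, ← rTensor_eq_algMap,
          f.isCompat, g.isCompat] }⟩

@[simp] lemma one_toFun (A : Type u) [CommRing A] [Algebra R A] (x : A ⊗[R] M) :
    (1 : PolyLaw R M R).toFun A x = 1 := rfl

@[simp] lemma mul_toFun (f g : PolyLaw R M R) (A : Type u) [CommRing A] [Algebra R A]
    (x : A ⊗[R] M) : (f * g).toFun A x = f.toFun A x * g.toFun A x := rfl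

noncomputable instance : CommRing (PolyLaw R M R) :=
  { (inferInstance : AddCommGroup (PolyLaw R M R)) with
    mul := (· * ·)
    one := 1
    mul_assoc := fun a b c => ext' (by intros; simp [mul_assoc])
    one_mul := fun a => ext' (by intros; simp)
    mul_one := fun a => ext' (by intros; simp)
    left_distrib := fun a b c => ext' (by intros; simp [mul_add])
    right_distrib := fun a b c => ext' (by intros; simp [add_mul])
    mul_comm := fun a b => ext' (by intros; simp [mul_comm])
    zero_mul := fun a => ext' (by intros; simp)
    mul_zero := fun a => ext' (by intros; simp) }

noncomputable instance : Algebra R (PolyLaw R M R) :=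
  Algebra.ofModule (fun r x y => ext' (by intros; simp [smul_mul_assoc]))
    (fun r x y => ext' (by intros; simp [mul_smul_comm]))

end PolyLaw

open PolyLaw

open MvPolynomial

section PolyKey
variable {A : Type u} [CommRing A]

private lemma sigma_monomial (m : Fin 2 →₀ ℕ) (c : A) :
    aeval (fun i => (Polynomial.X : Polynomial (MvPolynomial (Fin 2) A)) * Polynomial.C (X i))
      (monomial m c)
    = Polynomial.X ^ (m 0 + m 1) * Polynomial.C (monomial m c) := by
  rw [aeval_monomial, Finsupp.prod_fintype _ _ (fun i => pow_zero _), Fin.prod_univ_two,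
    monomial_eq, Finsupp.prod_fintype _ _ (fun i => pow_zero _), Fin.prod_univ_two,
    Polynomial.algebraMap_apply, MvPolynomial.algebraMap_eq]
  simp only [mul_pow, ← Polynomial.C_pow, map_mul, pow_add]
  ring

private lemma sigma_coeff (Q : MvPolynomial (Fin 2) A) (k : ℕ) (m : Fin 2 →₀ ℕ) :
    MvPolynomial.coeff m
      ((aeval (fun i => (Polynomial.X : Polynomial (MvPolynomial (Fin 2) A))
          * Polynomial.C (X i)) Q).coeff k)
    = if m 0 + m 1 = k then MvPolynomial.coeff m Q else 0 := by
  induction Q using MvPolynomial.induction_on' with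
  | monomial u c =>
    rw [sigma_monomial, mul_comm, Polynomial.C_mul_X_pow_eq_monomial, Polynomial.coeff_monomial]
    by_cases hu : u = m
    · subst hu
      by_cases hk : u 0 + u 1 = k <;> simp [hk, MvPolynomial.coeff_monomial]
    · by_cases hk : u 0 + u 1 = k <;>
        simp [hk, MvPolynomial.coeff_monomial, hu]
  | add p q hp hq =>
    simp only [map_add, Polynomial.coeff_add, MvPolynomial.coeff_add, hp, hq]
    split_ifs <;> simp

private lemma tau_coeff (P : MvPolynomial (Fin 2) A) (c : A) (k : ℕ) :
    (aeval ![(Polynomial.X : Polynomial A), Polynomial.C c] P).coeff k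
    = ∑ m' ∈ P.support, (if m' 0 = k then MvPolynomial.coeff m' P * c ^ (m' 1) else 0) := by
  conv_lhs => rw [← support_sum_monomial_coeff P]
  rw [map_sum, Polynomial.finset_sum_coeff]
  refine Finset.sum_congr rfl fun m' _ => ?_
  rw [aeval_monomial, Finsupp.prod_fintype _ _ (fun i => pow_zero _), Fin.prod_univ_two]
  simp only [Matrix.cons_val_zero, Matrix.cons_val_one, Matrix.head_cons]
  rw [Polynomial.algebraMap_apply, ← Polynomial.C_pow]
  have h : (Polynomial.C (algebraMap A A (MvPolynomial.coeff m' P)) : Polynomial A)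
      * (Polynomial.X ^ (m' 0) * Polynomial.C (c ^ (m' 1)))
      = Polynomial.C (MvPolynomial.coeff m' P * c ^ (m' 1)) * Polynomial.X ^ (m' 0) := by
    simp only [Algebra.algebraMap_self, RingHom.id_apply, map_mul]
    ring
  rw [h, Polynomial.C_mul_X_pow_eq_monomial, Polynomial.coeff_monomial]

lemma polyKey (d : ℕ) (P : MvPolynomial (Fin 2) A)
    (hH : aeval (fun i => (Polynomial.X : Polynomial (MvPolynomial (Fin 2) A))
        * Polynomial.C (X i)) P = Polynomial.X ^ d * Polynomial.C P)
    (hI : aeval ![X 0, X 1 + 1] P = P) (a : A) :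
    aeval ![(1 : A), a] P = aeval ![(1 : A), 0] P := by
  classical
  -- homogeneity of coefficients
  have hcoeff : ∀ m : Fin 2 →₀ ℕ, m 0 + m 1 ≠ d → MvPolynomial.coeff m P = 0 := by
    intro m hm
    have h2 := congrArg (fun q : Polynomial (MvPolynomial (Fin 2) A) =>
      MvPolynomial.coeff m (q.coeff (m 0 + m 1))) hH
    rw [sigma_coeff P (m 0 + m 1) m, if_pos rfl, mul_comm,
      Polynomial.C_mul_X_pow_eq_monomial, Polynomial.coeff_monomial,
      if_neg (fun h => hm h.symm)] at h2
    simpa using h2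
  -- transfer hI to single-variable identity
  have hJ : aeval ![(Polynomial.X : Polynomial A), Polynomial.C (1 : A)] P
      = aeval ![Polynomial.X, Polynomial.C (0 : A)] P := by
    have h := MvPolynomial.comp_aeval_apply (f := (![X 0, X 1 + 1] : Fin 2 → MvPolynomial (Fin 2) A))
      (aeval ![(Polynomial.X : Polynomial A), Polynomial.C (0 : A)]) P
    rw [hI] at h
    have hfun : (fun i => (aeval ![(Polynomial.X : Polynomial A), Polynomial.C (0 : A)])
        ((![X 0, X 1 + 1] : Fin 2 → MvPolynomial (Fin 2) A) i))
        = ![Polynomial.X, Polynomial.C (1 : A)] := by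
      funext i
      fin_cases i <;> simp
    rw [hfun] at h
    exact h.symm
  -- all support monomials have zero exponent in the second variable
  have hY : ∀ m : Fin 2 →₀ ℕ, m 1 ≠ 0 → MvPolynomial.coeff m P = 0 := by
    intro m hm1
    by_cases hc : MvPolynomial.coeff m P = 0
    · exact hc
    exfalso
    have hmem : m ∈ P.support := MvPolynomial.mem_support_iff.mpr hc
    have hmd : m 0 + m 1 = d := by
      by_contra h
      exact hc (hcoeff m h)
    have hbeq : ∀ b ∈ P.support, b 0 = m 0 → b = m := by
      intro b hb h0
      have hbd : b 0 + b 1 = d := by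
        by_contra h
        exact (MvPolynomial.mem_support_iff.mp hb) (hcoeff b h)
      have h1 : b 1 = m 1 := by omega
      ext i
      fin_cases i
      · exact h0
      · exact h1
    have e := congrArg (fun q : Polynomial A => q.coeff (m 0)) hJ
    simp only [tau_coeff] at e
    have eL : (∑ b ∈ P.support,
        if b 0 = m 0 then MvPolynomial.coeff b P * (1 : A) ^ b 1 else 0)
        = MvPolynomial.coeff m P := by
      rw [Finset.sum_eq_single_of_mem m hmem]
      · rw [if_pos rfl, one_pow, mul_one]
      · intro b hb hbm
        rw [if_neg]
        intro h0
        exact hbm (hbeq b hb h0)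
    have eR : (∑ b ∈ P.support,
        if b 0 = m 0 then MvPolynomial.coeff b P * (0 : A) ^ b 1 else 0) = 0 := by
      refine Finset.sum_eq_zero fun b hb => ?_
      split_ifs with h0
      · rw [hbeq b hb h0, zero_pow hm1, mul_zero]
      · rfl
    rw [eL, eR] at e
    exact hc e
  -- conclude
  conv_lhs => rw [← support_sum_monomial_coeff P]
  conv_rhs => rw [← support_sum_monomial_coeff P]
  rw [map_sum, map_sum]
  refine Finset.sum_congr rfl fun m hm => ?_
  have hm1 : m 1 = 0 := by
    by_contra h
    exact (MvPolynomial.mem_support_iff.mp hm) (hY m h)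
  rw [aeval_monomial, aeval_monomial, Finsupp.prod_fintype _ _ (fun i => pow_zero _),
    Finsupp.prod_fintype _ _ (fun i => pow_zero _), Fin.prod_univ_two, Fin.prod_univ_two]
  simp [hm1]

end PolyKey


section Helpers

namespace PolyLaw

variable {R : Type u} [CommRing R] {M N : Type u}
  [AddCommGroup M] [Module R M] [AddCommGroup N] [Module R N]

lemma rTensor_smul_alg {A B : Type u} [CommRing A] [Algebra R A] [CommRing B] [Algebra R B]
    (φ : A →ₐ[R] B) (a : A) (z : A ⊗[R] N) :
    LinearMap.rTensor N φ.toLinearMap (a • z) = φ a • LinearMap.rTensor N φ.toLinearMap z := by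
  induction z using TensorProduct.induction_on with
  | zero => simp
  | tmul b n => simp [TensorProduct.smul_tmul', smul_eq_mul, map_mul]
  | add x y hx hy => simp only [smul_add, map_add, hx, hy]

lemma lTensor_smul_alg {A : Type u} [CommRing A] [Algebra R A] (ψ : N →ₗ[R] M) (a : A)
    (z : A ⊗[R] N) :
    LinearMap.lTensor A ψ (a • z) = a • LinearMap.lTensor A ψ z := by
  induction z using TensorProduct.induction_on with
  | zero => simp
  | tmul b n => simp [TensorProduct.smul_tmul', smul_eq_mul]
  | add x y hx hy => simp only [smul_add, map_add, hx, hy]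

lemma rid_rTensor {A B : Type u} [CommRing A] [Algebra R A] [CommRing B] [Algebra R B]
    (φ : A →ₐ[R] B) (z : A ⊗[R] R) :
    TensorProduct.rid R B (LinearMap.rTensor R φ.toLinearMap z)
      = φ (TensorProduct.rid R A z) := by
  induction z using TensorProduct.induction_on with
  | zero => simp
  | tmul a r => simp [TensorProduct.rid_tmul, map_smul]
  | add x y hx hy => simp only [map_add, hx, hy]

lemma rid_smul {A : Type u} [CommRing A] [Algebra R A] (a : A) (z : A ⊗[R] R) :
    TensorProduct.rid R A (a • z) = a * TensorProduct.rid R A z := by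
  induction z using TensorProduct.induction_on with
  | zero => simp
  | tmul b r => simp [TensorProduct.smul_tmul', smul_eq_mul, TensorProduct.rid_tmul,
      mul_smul_comm]
  | add x y hx hy => simp only [smul_add, map_add, hx, hy, mul_add]

lemma comp_translation_toFun (g : PolyLaw R N M) (u : N) (A : Type u) [CommRing A] [Algebra R A]
    (x : A ⊗[R] N) :
    (g.comp (translation u)).toFun A x = g.toFun A (x + (1 : A) ⊗ₜ[R] u) := rfl

lemma comp_ofLinear_toFun (f : PolyLaw R M N) (ψ : N →ₗ[R] M) (A : Type u) [CommRing A]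
    [Algebra R A] (x : A ⊗[R] N) :
    (f.comp (ofLinear ψ)).toFun A x = f.toFun A (LinearMap.lTensor A ψ x) := rfl

open MvPolynomial in
/-- Key lemma: a homogeneous law invariant under `t_u` is invariant under translation by
`a ⊗ u` for any scalar `a` in any algebra. -/
lemma key_invariance (g : PolyLaw R N R) (d : ℕ) (hg : g.IsHomogeneous d) (u : N)
    (hu : g.comp (translation u) = g)
    (A : Type u) [CommRing A] [Algebra R A] (a : A) (x : A ⊗[R] N) :
    g.toFun A (x + a ⊗ₜ[R] u) = g.toFun A x := by
  classical
  set B := MvPolynomial (Fin 2) A with hB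
  let ιB : A →ₐ[R] B := IsScalarTower.toAlgHom R A B
  set w : B ⊗[R] N := (X 0 : B) • LinearMap.rTensor N ιB.toLinearMap x + (X 1 : B) ⊗ₜ[R] u
    with hwdef
  have hw : ∀ (C : Type u) [CommRing C] [Algebra R C] (φ : B →ₐ[R] C),
      LinearMap.rTensor N φ.toLinearMap w
        = φ (X 0) • LinearMap.rTensor N (φ.comp ιB).toLinearMap x + φ (X 1) ⊗ₜ[R] u := by
    intro C _ _ φ
    rw [hwdef, map_add, rTensor_smul_alg, LinearMap.rTensor_tmul,
      AlgHom.comp_toLinearMap, LinearMap.rTensor_comp, LinearMap.coe_comp, Function.comp_apply,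
      AlgHom.toLinearMap_apply]
  set P : MvPolynomial (Fin 2) A := TensorProduct.rid R B (g.toFun B w) with hPdef
  -- translation invariance identity
  have hI : aeval ![X 0, X 1 + 1] P = P := by
    have hαι : (AlgHom.restrictScalars R (aeval ![X 0, X 1 + 1] : B →ₐ[A] B)).comp ιB = ιB := by
      apply AlgHom.ext
      intro a
      exact (aeval ![X 0, X 1 + 1] : B →ₐ[A] B).commutes a
    have hwα : LinearMap.rTensor N
        (AlgHom.restrictScalars R (aeval ![X 0, X 1 + 1] : B →ₐ[A] B)).toLinearMap w
        = w + (1 : B) ⊗ₜ[R] u := by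
      rw [hw, hαι, hwdef]
      have h0 : (AlgHom.restrictScalars R (aeval ![X 0, X 1 + 1] : B →ₐ[A] B)) (X 0)
          = (X 0 : B) := by simp
      have h1 : (AlgHom.restrictScalars R (aeval ![X 0, X 1 + 1] : B →ₐ[A] B)) (X 1)
          = (X 1 : B) + 1 := by simp
      rw [h0, h1, TensorProduct.add_tmul]
      abel
    have hcomp := g.isCompat (AlgHom.restrictScalars R (aeval ![X 0, X 1 + 1] : B →ₐ[A] B)) w
    rw [hwα] at hcomp
    have htr : g.toFun B (w + (1 : B) ⊗ₜ[R] u) = g.toFun B w := by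
      have := congrArg (fun h : PolyLaw R N R => h.toFun B w) hu
      simpa [comp_translation_toFun] using this
    rw [htr] at hcomp
    have := congrArg (TensorProduct.rid R B) hcomp
    rw [rid_rTensor] at this
    exact this
  -- homogeneity identity
  have hH : aeval (fun i => (Polynomial.X : Polynomial (MvPolynomial (Fin 2) A))
      * Polynomial.C (X i)) P = Polynomial.X ^ d * Polynomial.C P := by
    set σ : B →ₐ[A] Polynomial B :=
      aeval (fun i => (Polynomial.X : Polynomial B) * Polynomial.C (X i)) with hσdef
    let ιC : B →ₐ[R] Polynomial B := IsScalarTower.toAlgHom R B (Polynomial B)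
    have hσι : (AlgHom.restrictScalars R σ).comp ιB = ιC.comp ιB := by
      apply AlgHom.ext
      intro a
      show σ (algebraMap A B a) = ιC (algebraMap A B a)
      rw [σ.commutes a]
      show algebraMap A (Polynomial B) a = algebraMap B (Polynomial B) (algebraMap A B a)
      rw [← IsScalarTower.algebraMap_apply]
    have hwσ : LinearMap.rTensor N (AlgHom.restrictScalars R σ).toLinearMap w
        = (Polynomial.X : Polynomial B) • LinearMap.rTensor N ιC.toLinearMap w := by
      rw [hw, hw, hσι]
      have h0 : (AlgHom.restrictScalars R σ) (X 0)
          = (Polynomial.X : Polynomial B) * Polynomial.C (X 0) := by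
        rw [AlgHom.restrictScalars_apply, hσdef, aeval_X]
      have h1 : (AlgHom.restrictScalars R σ) (X 1)
          = (Polynomial.X : Polynomial B) * Polynomial.C (X 1) := by
        rw [AlgHom.restrictScalars_apply, hσdef, aeval_X]
      have hc0 : ιC (X 0) = Polynomial.C (X 0 : B) := by
        show algebraMap B (Polynomial B) _ = _
        rw [Polynomial.algebraMap_eq]
      have hc1 : ιC (X 1) = Polynomial.C (X 1 : B) := by
        show algebraMap B (Polynomial B) _ = _
        rw [Polynomial.algebraMap_eq]
      rw [h0, h1, hc0, hc1, smul_add, smul_smul, TensorProduct.smul_tmul', smul_eq_mul]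
    have hcomp := g.isCompat (AlgHom.restrictScalars R σ) w
    rw [hwσ, hg (Polynomial B) Polynomial.X, ← g.isCompat ιC w] at hcomp
    have := congrArg (TensorProduct.rid R (Polynomial B)) hcomp
    rw [rid_rTensor, rid_smul, rid_rTensor] at this
    have hioc : ιC (TensorProduct.rid R B (g.toFun B w)) = Polynomial.C P := by
      show algebraMap B (Polynomial B) _ = _
      rw [Polynomial.algebraMap_eq, hPdef]
    rw [hioc] at this
    exact this
  -- evaluation
  have hval : ∀ c : A, g.toFun A (x + c ⊗ₜ[R] u)
      = LinearMap.rTensor R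
          (AlgHom.restrictScalars R (aeval ![(1 : A), c] : B →ₐ[A] A)).toLinearMap
          (g.toFun B w) := by
    intro c
    have hει : (AlgHom.restrictScalars R (aeval ![(1 : A), c] : B →ₐ[A] A)).comp ιB
        = AlgHom.id R A := by
      apply AlgHom.ext
      intro a
      exact (aeval ![(1 : A), c] : B →ₐ[A] A).commutes a
    have hwε : LinearMap.rTensor N
        (AlgHom.restrictScalars R (aeval ![(1 : A), c] : B →ₐ[A] A)).toLinearMap w
        = x + c ⊗ₜ[R] u := by
      rw [hw, hει]
      have h0 : (AlgHom.restrictScalars R (aeval ![(1 : A), c] : B →ₐ[A] A)) (X 0) = 1 := by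
        simp
      have h1 : (AlgHom.restrictScalars R (aeval ![(1 : A), c] : B →ₐ[A] A)) (X 1) = c := by
        simp
      rw [h0, h1, one_smul]
      congr 1
      show LinearMap.rTensor N (AlgHom.id R A).toLinearMap x = x
      rw [AlgHom.toLinearMap_id, LinearMap.rTensor_id, LinearMap.id_apply]
    rw [← hwε, ← g.isCompat]
  have hx0 : x = x + (0 : A) ⊗ₜ[R] u := by rw [TensorProduct.zero_tmul, add_zero]
  rw [hval a]
  conv_rhs => rw [hx0, hval 0]
  apply (TensorProduct.rid R A).injective
  rw [rid_rTensor, rid_rTensor]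
  exact polyKey d P hH hI a

end PolyLaw

end Helpers


/-- **The graded subring lemma.**  Let `ψ : N → M` be a surjective homomorphism of `R`-modules.
Pullback along `ψ` (sending a polynomial law `f : M → R` to `f ∘ ψ`) is a graded isomorphism from
the graded ring `R[M]` of polynomial laws `M → R` onto the graded subalgebra of `R[N]` whose
degree-`d` part consists of the homogeneous degree-`d` laws `f : N → R` with `f ∘ t_u = f` for
all `u ∈ ker ψ`:  the pullback is injective, additive and multiplicative, and for every `d` it
maps the degree-`d` homogeneous laws on `M` onto the translation-invariant degree-`d` homogeneous
laws on `N`. -/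
theorem graded_subring_lemma (R : Type u) [CommRing R] (M N : Type u)
    [AddCommGroup M] [Module R M] [AddCommGroup N] [Module R N]
    (ψ : N →ₗ[R] M) (hψ : Function.Surjective ψ) :
    Function.Injective (fun f : PolyLaw R M R => f.comp (ofLinear ψ)) ∧
    (∀ f g : PolyLaw R M R, (f + g).comp (ofLinear ψ)
        = f.comp (ofLinear ψ) + g.comp (ofLinear ψ)) ∧
    (∀ f g : PolyLaw R M R, (f * g).comp (ofLinear ψ)
        = (f.comp (ofLinear ψ)) * (g.comp (ofLinear ψ))) ∧
    (∀ d : ℕ, (fun f : PolyLaw R M R => f.comp (ofLinear ψ)) ''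
        {f : PolyLaw R M R | f.IsHomogeneous d} =
      {f : PolyLaw R N R | f.IsHomogeneous d ∧
        ∀ u ∈ LinearMap.ker ψ, f.comp (translation u) = f}) := by
  classical
  have hsur : ∀ (A : Type u) [CommRing A] [Algebra R A],
      Function.Surjective (LinearMap.lTensor A ψ) := fun A _ _ =>
    LinearMap.lTensor_surjective A hψ
  refine ⟨?_, ?_, ?_, ?_⟩
  · -- injectivity
    intro f g h
    apply ext'
    intro A _ _ x
    obtain ⟨y, rfl⟩ := hsur A x
    have := congrArg (fun F : PolyLaw R N R => F.toFun A y) h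
    exact this
  · -- additivity
    intro f g
    exact ext' fun A _ _ x => rfl
  · -- multiplicativity
    intro f g
    exact ext' fun A _ _ x => rfl
  · -- graded image
    intro d
    apply Set.eq_of_subset_of_subset
    · rintro _ ⟨f, hf, rfl⟩
      constructor
      · intro A _ _ a x
        show f.toFun A (LinearMap.lTensor A ψ (a • x))
          = a ^ d • f.toFun A (LinearMap.lTensor A ψ x)
        rw [lTensor_smul_alg]
        exact hf A a _
      · intro u hu
        apply ext'
        intro A _ _ x
        show f.toFun A (LinearMap.lTensor A ψ (x + (1 : A) ⊗ₜ[R] u))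
          = f.toFun A (LinearMap.lTensor A ψ x)
        rw [map_add, LinearMap.lTensor_tmul, LinearMap.mem_ker.mp hu,
          TensorProduct.tmul_zero, add_zero]
    · rintro g ⟨hgd, hginv⟩
      -- `g` is constant on the fibers of `lTensor A ψ`
      have hconst : ∀ (A : Type u) [CommRing A] [Algebra R A] (y y' : A ⊗[R] N),
          LinearMap.lTensor A ψ y = LinearMap.lTensor A ψ y' →
          g.toFun A y = g.toFun A y' := by
        intro A _ _ y y' h
        have hker : LinearMap.lTensor A ψ (y' - y) = 0 := by rw [map_sub, h, sub_self]
        have hex := lTensor_exact A (LinearMap.exact_subtype_ker_map ψ) hψ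
        obtain ⟨t, ht⟩ := (hex (y' - y)).mp hker
        have main : ∀ (t : A ⊗[R] (LinearMap.ker ψ)) (z : A ⊗[R] N),
            g.toFun A (z + LinearMap.lTensor A (LinearMap.ker ψ).subtype t)
              = g.toFun A z := by
          intro t
          induction t using TensorProduct.induction_on with
          | zero => intro z; rw [map_zero, add_zero]
          | tmul a v =>
            intro z
            rw [LinearMap.lTensor_tmul]
            exact key_invariance g d hgd v.1 (hginv v.1 v.2) A a z
          | add t₁ t₂ h₁ h₂ =>
            intro z
            rw [map_add, ← add_assoc, h₂ (z + LinearMap.lTensor A (LinearMap.ker ψ).subtype t₁),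
              h₁ z]
        have hmain := main t y
        rw [ht] at hmain
        rw [← hmain, add_sub_cancel]
      refine ⟨{ toFun := fun A _ _ x => g.toFun A (Function.surjInv (hsur A) x)
                isCompat := ?_ }, ?_, ?_⟩
      · intro A B _ _ _ _ φ x
        show LinearMap.rTensor R φ.toLinearMap (g.toFun A (Function.surjInv (hsur A) x))
          = g.toFun B (Function.surjInv (hsur B) (LinearMap.rTensor M φ.toLinearMap x))
        rw [g.isCompat φ]
        apply hconst B
        have h1 : LinearMap.lTensor B ψ (LinearMap.rTensor N φ.toLinearMap
            (Function.surjInv (hsur A) x))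
            = LinearMap.rTensor M φ.toLinearMap (LinearMap.lTensor A ψ
                (Function.surjInv (hsur A) x)) := by
          rw [← LinearMap.comp_apply, ← LinearMap.comp_apply, LinearMap.lTensor_comp_rTensor,
            LinearMap.rTensor_comp_lTensor]
        rw [h1, Function.surjInv_eq (hsur A), Function.surjInv_eq (hsur B)]
      · -- homogeneity of the constructed law
        intro A _ _ a x
        show g.toFun A (Function.surjInv (hsur A) (a • x))
          = a ^ d • g.toFun A (Function.surjInv (hsur A) x)
        have e1 : g.toFun A (Function.surjInv (hsur A) (a • x))
            = g.toFun A (a • Function.surjInv (hsur A) x) := by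
          apply hconst A
          rw [Function.surjInv_eq (hsur A), lTensor_smul_alg, Function.surjInv_eq (hsur A)]
        rw [e1, hgd]
      · -- the constructed law pulls back to `g`
        apply ext'
        intro A _ _ x
        show g.toFun A (Function.surjInv (hsur A) (LinearMap.lTensor A ψ x)) = g.toFun A x
        apply hconst A
        rw [Function.surjInv_eq (hsur A)]
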